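/- arXiv:2402.13179 — 3 statements merged into one kernel-verified Lean document; each statement's English description precedes it below -/
import Mathlib

section
/- Let M be a left H-Hopf module and suppose ν := α ∘ (σ ⊗ 1_M) ∘ φ splits as ν = ι ∘ υ with υ ∘ ι = 1_{M^H} for an object M^H and maps ι: M^H → M, υ: M → M^H. Then ι is the equalizer of φ and η ⊗ 1_M : M → H ⊗ M. -/
open CategoryTheory MonoidalCategory BraidedCategory

universe v u

/-- A Hopf algebra object in a braided monoidal category, given by explicit
structure maps and axioms. -/
structure HopfAlg (C : Type u) [Category.{v} C] [MonoidalCategory C]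
    [BraidedCategory C] where
  H : C
  η : 𝟙_ C ⟶ H
  μ : H ⊗ H ⟶ H
  ε : H ⟶ 𝟙_ C
  δ : H ⟶ H ⊗ H
  σ : H ⟶ H
  mul_assoc : (μ ▷ H) ≫ μ = (α_ H H H).hom ≫ (H ◁ μ) ≫ μ
  one_mul : (η ▷ H) ≫ μ = (λ_ H).hom
  mul_one : (H ◁ η) ≫ μ = (ρ_ H).hom
  coassoc : δ ≫ (δ ▷ H) = δ ≫ (H ◁ δ) ≫ (α_ H H H).inv
  counit_left : δ ≫ (ε ▷ H) = (λ_ H).inv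
  counit_right : δ ≫ (H ◁ ε) = (ρ_ H).inv
  mul_counit : μ ≫ ε = (ε ⊗ₘ ε) ≫ (λ_ (𝟙_ C)).hom
  one_counit : η ≫ ε = 𝟙 (𝟙_ C)
  mul_comul : μ ≫ δ = (δ ⊗ₘ δ) ≫ tensorμ H H H H ≫ (μ ⊗ₘ μ)
  one_comul : η ≫ δ = (λ_ (𝟙_ C)).inv ≫ (η ⊗ₘ η)
  antipode_left : δ ≫ (σ ▷ H) ≫ μ = ε ≫ η
  antipode_right : δ ≫ (H ◁ σ) ≫ μ = ε ≫ η

/-- A left Hopf module over a Hopf algebra object `A` in a braided monoidal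
category: a left `A`-module and left `A`-comodule satisfying the Hopf module
compatibility law. -/
structure HopfModule {C : Type u} [Category.{v} C] [MonoidalCategory C]
    [BraidedCategory C] (A : HopfAlg C) where
  M : C
  act : A.H ⊗ M ⟶ M
  coact : M ⟶ A.H ⊗ M
  act_mul : (A.μ ▷ M) ≫ act = (α_ A.H A.H M).hom ≫ (A.H ◁ act) ≫ act
  act_one : (A.η ▷ M) ≫ act = (λ_ M).hom
  coact_comul : coact ≫ (A.δ ▷ M) = coact ≫ (A.H ◁ coact) ≫ (α_ A.H A.H M).inv
  coact_counit : coact ≫ (A.ε ▷ M) = (λ_ M).inv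
  compat : act ≫ coact = (A.δ ⊗ₘ coact) ≫ tensorμ A.H A.H A.H M ≫ (A.μ ⊗ₘ act)

namespace HopfAlg

variable {C : Type u} [Category.{v} C] [MonoidalCategory C] [BraidedCategory C]
  (A : HopfAlg C)

/-- The underlying monoid object. -/
def toMon : MonObj A.H where
  one := A.η
  mul := A.μ
  one_mul := A.one_mul
  mul_one := A.mul_one
  mul_assoc := A.mul_assoc

/-- Repackage a `HopfAlg` as a `Hopf_`. -/
def toHopf : HopfObj A.H where
  toMonObj := A.toMon
  counit := A.ε
  comul := A.δ
  counit_comul := A.counit_left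
  comul_counit := A.counit_right
  comul_assoc := by
    rw [reassoc_of% A.coassoc]
    simp
  mul_comul := A.mul_comul
  one_comul := A.one_comul
  mul_counit := A.mul_counit
  one_counit := A.one_counit
  antipode := A.σ
  antipode_left := A.antipode_left
  antipode_right := A.antipode_right

theorem one_antipode : A.η ≫ A.σ = A.η := @HopfObj.one_antipode C _ _ _ A.H A.toHopf

theorem antipode_comul :
    A.σ ≫ A.δ = A.δ ≫ (β_ A.H A.H).hom ≫ (A.σ ⊗ₘ A.σ) :=
  @HopfObj.antipode_comul C _ _ _ A.H A.toHopf

end HopfAlg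

section Slide
variable {C : Type u} [Category.{v} C] [MonoidalCategory C] [BraidedCategory C]

theorem slide (X A B M' : C) :
    (α_ X A (B ⊗ M')).inv ≫ ((β_ X A).hom ▷ (B ⊗ M')) ≫ tensorμ A X B M' =
      (X ◁ (α_ A B M').inv) ≫ (α_ X (A ⊗ B) M').inv ≫ ((β_ X (A ⊗ B)).hom ▷ M') ≫
        (α_ (A ⊗ B) X M').hom := by
  simp only [tensorμ, braiding_tensor_right_hom, comp_whiskerRight, Category.assoc]
  monoidal

end Slide

namespace HopfModule

variable {C : Type u} [Category.{v} C] [MonoidalCategory C] [BraidedCategory C]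
  {A : HopfAlg C} (N : HopfModule A)

theorem coact_comul' :
    N.coact ≫ (A.H ◁ N.coact) =
      N.coact ≫ (A.δ ▷ N.M) ≫ (α_ A.H A.H N.M).hom := by
  simp only [← Category.assoc]
  rw [N.coact_comul]
  simp

theorem nu_coact :
    (N.coact ≫ (A.σ ▷ N.M) ≫ N.act) ≫ N.coact =
      (N.coact ≫ (A.σ ▷ N.M) ≫ N.act) ≫ (λ_ N.M).inv ≫ (A.η ▷ N.M) := by
  calc (N.coact ≫ (A.σ ▷ N.M) ≫ N.act) ≫ N.coact
      = N.coact ≫ (A.σ ▷ N.M) ≫ (A.δ ⊗ₘ N.coact) ≫ tensorμ A.H A.H A.H N.M ≫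
          (A.μ ⊗ₘ N.act) := by
        simp only [Category.assoc, N.compat]
    _ = N.coact ≫ ((A.σ ≫ A.δ) ▷ N.M) ≫ ((A.H ⊗ A.H) ◁ N.coact) ≫
          tensorμ A.H A.H A.H N.M ≫ (A.μ ⊗ₘ N.act) := by
        rw [MonoidalCategory.tensorHom_def, comp_whiskerRight]
        simp only [Category.assoc]
    _ = N.coact ≫ (A.δ ▷ N.M) ≫ ((β_ A.H A.H).hom ▷ N.M) ≫ ((A.σ ⊗ₘ A.σ) ▷ N.M) ≫
          ((A.H ⊗ A.H) ◁ N.coact) ≫ tensorμ A.H A.H A.H N.M ≫ (A.μ ⊗ₘ N.act) := by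
        rw [A.antipode_comul]
        simp only [comp_whiskerRight, Category.assoc]
    _ = N.coact ≫ (A.δ ▷ N.M) ≫ ((β_ A.H A.H).hom ▷ N.M) ≫ ((A.H ⊗ A.H) ◁ N.coact) ≫
          ((A.σ ⊗ₘ A.σ) ▷ (A.H ⊗ N.M)) ≫ tensorμ A.H A.H A.H N.M ≫ (A.μ ⊗ₘ N.act) := by
        slice_lhs 4 5 => rw [← whisker_exchange]
        simp only [Category.assoc]
    _ = N.coact ≫ (A.δ ▷ N.M) ≫ ((β_ A.H A.H).hom ▷ N.M) ≫ ((A.H ⊗ A.H) ◁ N.coact) ≫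
          tensorμ A.H A.H A.H N.M ≫
          (((A.σ ▷ A.H) ≫ A.μ) ⊗ₘ ((A.σ ▷ N.M) ≫ N.act)) := by
        slice_lhs 5 6 => rw [tensorμ_natural_left]
        simp only [Category.assoc, tensorHom_comp_tensorHom]
    _ = N.coact ≫ (A.δ ▷ N.M) ≫ ((A.H ⊗ A.H) ◁ N.coact) ≫
          ((β_ A.H A.H).hom ▷ (A.H ⊗ N.M)) ≫ tensorμ A.H A.H A.H N.M ≫
          (((A.σ ▷ A.H) ≫ A.μ) ⊗ₘ ((A.σ ▷ N.M) ≫ N.act)) := by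
        slice_lhs 3 4 => rw [← whisker_exchange]
        simp only [Category.assoc]
    _ = N.coact ≫ (A.H ◁ N.coact) ≫ (A.H ◁ (A.H ◁ N.coact)) ≫
          (α_ A.H A.H (A.H ⊗ N.M)).inv ≫
          ((β_ A.H A.H).hom ▷ (A.H ⊗ N.M)) ≫ tensorμ A.H A.H A.H N.M ≫
          (((A.σ ▷ A.H) ≫ A.μ) ⊗ₘ ((A.σ ▷ N.M) ≫ N.act)) := by
        slice_lhs 1 2 => rw [N.coact_comul]
        slice_lhs 3 4 => rw [← associator_inv_naturality_right]
        simp only [Category.assoc]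
    _ = N.coact ≫ (A.H ◁ N.coact) ≫ (A.H ◁ (A.δ ▷ N.M)) ≫
          (A.H ◁ (α_ A.H A.H N.M).hom) ≫
          (α_ A.H A.H (A.H ⊗ N.M)).inv ≫
          ((β_ A.H A.H).hom ▷ (A.H ⊗ N.M)) ≫ tensorμ A.H A.H A.H N.M ≫
          (((A.σ ▷ A.H) ≫ A.μ) ⊗ₘ ((A.σ ▷ N.M) ≫ N.act)) := by
        slice_lhs 2 3 =>
          simp only [← MonoidalCategory.whiskerLeft_comp]
          rw [N.coact_comul']
          simp only [MonoidalCategory.whiskerLeft_comp]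
        simp only [Category.assoc]
    _ = N.coact ≫ (A.H ◁ N.coact) ≫ (A.H ◁ (A.δ ▷ N.M)) ≫
          (α_ A.H (A.H ⊗ A.H) N.M).inv ≫ ((β_ A.H (A.H ⊗ A.H)).hom ▷ N.M) ≫
          (α_ (A.H ⊗ A.H) A.H N.M).hom ≫
          (((A.σ ▷ A.H) ≫ A.μ) ⊗ₘ ((A.σ ▷ N.M) ≫ N.act)) := by
        slice_lhs 4 7 => rw [slide]
        simp only [Category.assoc, whiskerLeft_hom_inv_assoc]
    _ = N.coact ≫ (A.H ◁ N.coact) ≫ (α_ A.H A.H N.M).inv ≫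
          ((β_ A.H A.H).hom ▷ N.M) ≫ ((A.δ ▷ A.H) ▷ N.M) ≫
          (α_ (A.H ⊗ A.H) A.H N.M).hom ≫
          (((A.σ ▷ A.H) ≫ A.μ) ⊗ₘ ((A.σ ▷ N.M) ≫ N.act)) := by
        slice_lhs 3 4 => rw [associator_inv_naturality_middle]
        slice_lhs 4 5 =>
          rw [← comp_whiskerRight, braiding_naturality_right, comp_whiskerRight]
        simp only [Category.assoc]
    _ = N.coact ≫ (A.H ◁ N.coact) ≫ (α_ A.H A.H N.M).inv ≫
          ((β_ A.H A.H).hom ▷ N.M) ≫ (α_ A.H A.H N.M).hom ≫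
          ((A.ε ≫ A.η) ▷ (A.H ⊗ N.M)) ≫ (A.H ◁ ((A.σ ▷ N.M) ≫ N.act)) := by
        slice_lhs 5 6 => rw [associator_naturality_left]
        rw [MonoidalCategory.tensorHom_def]
        simp only [Category.assoc]
        slice_lhs 6 7 => rw [← comp_whiskerRight, A.antipode_left]
    _ = (N.coact ≫ (A.σ ▷ N.M) ≫ N.act) ≫ (λ_ N.M).inv ≫ (A.η ▷ N.M) := by
        rw [comp_whiskerRight]
        slice_lhs 5 6 => rw [← associator_naturality_left]
        slice_lhs 4 5 => rw [← comp_whiskerRight, ← braiding_naturality_right,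
          braiding_tensorUnit_right, comp_whiskerRight, comp_whiskerRight]
        simp only [Category.assoc]
        slice_lhs 3 4 => rw [← associator_inv_naturality_middle]
        slice_lhs 2 3 =>
          simp only [← MonoidalCategory.whiskerLeft_comp]
          rw [N.coact_counit]
        simp only [Category.assoc]
        slice_lhs 7 8 => rw [← whisker_exchange]
        monoidal

theorem act_triv (Z : C) (t : Z ⟶ N.M)
    (ht : t ≫ N.coact = t ≫ ((λ_ N.M).inv ≫ (A.η ▷ N.M))) :
    t ≫ (N.coact ≫ (A.σ ▷ N.M) ≫ N.act) = t := by
  rw [← Category.assoc, ht]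
  simp only [Category.assoc]
  slice_lhs 3 4 => rw [← comp_whiskerRight, A.one_antipode]
  slice_lhs 3 4 => rw [N.act_one]
  simp

end HopfModule

open CategoryTheory.Limits in
/-- If the idempotent ν splits as ι ∘ υ, then ι is the equalizer of the
coaction φ and the trivial coaction η ⊗ 1. -/
theorem iota_isEqualizer {C : Type u} [Category.{v} C] [MonoidalCategory C]
    [BraidedCategory C] (A : HopfAlg C) (N : HopfModule A)
    (MH : C) (ι : MH ⟶ N.M) (υ : N.M ⟶ MH)
    (h1 : ι ≫ υ = 𝟙 MH)
    (h2 : υ ≫ ι = N.coact ≫ (A.σ ▷ N.M) ≫ N.act) :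
    ∃ w : ι ≫ N.coact = ι ≫ ((λ_ N.M).inv ≫ (A.η ▷ N.M)),
      Nonempty (IsLimit (Fork.ofι ι w)) := by
  have hι : ι ≫ (N.coact ≫ (A.σ ▷ N.M) ≫ N.act) = ι := by
    rw [← h2, ← Category.assoc, h1, Category.id_comp]
  have hnu := N.nu_coact
  simp only [Category.assoc] at hnu
  have w : ι ≫ N.coact = ι ≫ ((λ_ N.M).inv ≫ (A.η ▷ N.M)) := by
    conv_lhs => rw [← hι]
    simp only [Category.assoc]
    rw [hnu]
    conv_rhs => rw [← hι]
    simp only [Category.assoc]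
  refine ⟨w, ⟨Fork.IsLimit.mk _ (fun s => s.ι ≫ υ) (fun s => ?_) (fun s m hm => ?_)⟩⟩
  · simp only [Fork.ι_ofι, Category.assoc]
    rw [h2]
    exact N.act_triv _ s.ι s.condition
  · simp only [Fork.ι_ofι] at hm
    rw [← hm]
    simp [Category.assoc, h1]
end

section
/- Let M be a left H-Hopf module whose idempotent ν splits as ι ∘ υ through M^H. Then υ: M → M^H is the coequalizer of α and ε ⊗ 1_M : H ⊗ M → M. -/
open CategoryTheory MonoidalCategory BraidedCategory

universe v u

variable {C : Type u} [Category.{v} C] [MonoidalCategory C] [BraidedCategory C]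

/-- The Hopf monoid object. -/
def HopfAlg.toHopf_s8 (A : HopfAlg C) : HopfObj A.H where
  one := A.η
  mul := A.μ
  one_mul := A.one_mul
  mul_one := A.mul_one
  mul_assoc := A.mul_assoc
  counit := A.ε
  comul := A.δ
  counit_comul := A.counit_left
  comul_counit := A.counit_right
  comul_assoc := by
    rw [← cancel_mono (α_ A.H A.H A.H).inv]
    simpa using A.coassoc.symm
  mul_comul := A.mul_comul
  one_comul := by
    exact A.one_comul
  mul_counit := by
    simpa using A.mul_counit
  one_counit := A.one_counit
  antipode := A.σ
  antipode_left := A.antipode_left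
  antipode_right := A.antipode_right

example (A : HopfAlg C) : A.μ ≫ A.σ = (A.σ ⊗ₘ A.σ) ≫ (β_ _ _).hom ≫ A.μ :=
  @HopfObj.mul_antipode C _ _ _ A.H A.toHopf_s8

example (A : HopfAlg C) : A.σ ≫ A.ε = A.ε :=
  @HopfObj.antipode_counit C _ _ _ A.H A.toHopf_s8

lemma braidK (H M : C) :
    tensorμ H H H M ≫ ((β_ H H).hom ▷ (H ⊗ M)) ≫ (α_ H H (H ⊗ M)).hom
    = (α_ (H ⊗ H) H M).inv ≫ ((β_ (H ⊗ H) H).hom ▷ M) ≫ (α_ H (H ⊗ H) M).hom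
        ≫ (H ◁ (α_ H H M).hom) := by
  rw [braiding_tensor_left_hom]; simp [tensorμ]

lemma key (A : HopfAlg C) (N : HopfModule A) :
    N.act ≫ N.coact ≫ (A.σ ▷ N.M) ≫ N.act =
      (A.ε ▷ N.M) ≫ (λ_ N.M).hom ≫ N.coact ≫ (A.σ ▷ N.M) ≫ N.act := by
  have hma : A.μ ≫ A.σ = (A.σ ⊗ₘ A.σ) ≫ (β_ _ _).hom ≫ A.μ := @HopfObj.mul_antipode C _ _ _ A.H A.toHopf_s8
  have hact : (A.H ◁ N.act) ≫ N.act = (α_ A.H A.H N.M).inv ≫ (A.μ ▷ N.M) ≫ N.act := by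
    rw [N.act_mul]; simp
  calc N.act ≫ N.coact ≫ (A.σ ▷ N.M) ≫ N.act
      = (A.δ ⊗ₘ N.coact) ≫ tensorμ A.H A.H A.H N.M ≫ (A.μ ⊗ₘ N.act) ≫ (A.σ ▷ N.M) ≫ N.act := by
        rw [reassoc_of% N.compat]
    _ = (A.δ ⊗ₘ N.coact) ≫ tensorμ A.H A.H A.H N.M ≫
          (((A.σ ⊗ₘ A.σ) ≫ (β_ A.H A.H).hom ≫ A.μ) ⊗ₘ N.act) ≫ N.act := by
        rw [← hma]
        congr 2
        rw [← Category.assoc, ← tensorHom_id A.σ, tensorHom_comp_tensorHom, Category.comp_id]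
    _ = (A.δ ⊗ₘ N.coact) ≫ tensorμ A.H A.H A.H N.M ≫
          ((A.σ ⊗ₘ A.σ) ▷ (A.H ⊗ N.M)) ≫ ((β_ A.H A.H).hom ▷ (A.H ⊗ N.M)) ≫
          (α_ A.H A.H (A.H ⊗ N.M)).hom ≫
          (A.H ◁ ((α_ A.H A.H N.M).inv ≫ (A.μ ▷ N.M) ≫ N.act)) ≫ N.act := by
        congr 2
        rw [MonoidalCategory.tensorHom_def]
        simp only [comp_whiskerRight, Category.assoc]
        slice_lhs 3 4 => rw [← whisker_exchange]
        simp only [Category.assoc]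
        slice_lhs 4 5 => rw [N.act_mul]
        slice_lhs 3 4 => rw [associator_naturality_right]
        simp only [Category.assoc, MonoidalCategory.whiskerLeft_comp]
        slice_lhs 4 5 => rw [← MonoidalCategory.whiskerLeft_comp, hact]
        simp [MonoidalCategory.whiskerLeft_comp]
    _ = (A.δ ⊗ₘ N.coact) ≫ tensorμ A.H A.H A.H N.M ≫
          ((β_ A.H A.H).hom ▷ (A.H ⊗ N.M)) ≫ ((A.σ ⊗ₘ A.σ) ▷ (A.H ⊗ N.M)) ≫
          (α_ A.H A.H (A.H ⊗ N.M)).hom ≫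
          (A.H ◁ ((α_ A.H A.H N.M).inv ≫ (A.μ ▷ N.M) ≫ N.act)) ≫ N.act := by
        congr 2
        have hswap : ((A.σ ⊗ₘ A.σ) ≫ (β_ A.H A.H).hom) ▷ (A.H ⊗ N.M)
            = ((β_ A.H A.H).hom ≫ (A.σ ⊗ₘ A.σ)) ▷ (A.H ⊗ N.M) := by
          rw [braiding_naturality]
        simp only [comp_whiskerRight, Category.assoc] at hswap
        rw [reassoc_of% hswap]
    _ = (A.δ ⊗ₘ N.coact) ≫ tensorμ A.H A.H A.H N.M ≫
          ((β_ A.H A.H).hom ▷ (A.H ⊗ N.M)) ≫ (α_ A.H A.H (A.H ⊗ N.M)).hom ≫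
          (A.σ ▷ (A.H ⊗ (A.H ⊗ N.M))) ≫
          (A.H ◁ ((α_ A.H A.H N.M).inv ≫ (((A.σ ▷ A.H) ≫ A.μ) ▷ N.M) ≫ N.act)) ≫ N.act := by
        congr 3
        have h5 : ((A.σ ⊗ₘ A.σ) ▷ (A.H ⊗ N.M)) ≫ (α_ A.H A.H (A.H ⊗ N.M)).hom
            = (α_ A.H A.H (A.H ⊗ N.M)).hom ≫ (A.σ ▷ (A.H ⊗ (A.H ⊗ N.M)))
                ≫ (A.H ◁ (A.σ ▷ (A.H ⊗ N.M))) := by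
          rw [← tensorHom_id (A.σ ⊗ₘ A.σ), associator_naturality, MonoidalCategory.tensorHom_def]
          simp
        rw [reassoc_of% h5]
        congr 2
        rw [← MonoidalCategory.whiskerLeft_comp_assoc]
        congr 2
        rw [associator_inv_naturality_left_assoc]
        rw [← comp_whiskerRight_assoc]
                
    _ = (A.δ ⊗ₘ N.coact) ≫ (α_ (A.H ⊗ A.H) A.H N.M).inv ≫
          ((β_ (A.H ⊗ A.H) A.H).hom ▷ N.M) ≫ (α_ A.H (A.H ⊗ A.H) N.M).hom ≫
          (A.H ◁ (α_ A.H A.H N.M).hom) ≫ (A.σ ▷ (A.H ⊗ (A.H ⊗ N.M))) ≫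
          (A.H ◁ ((α_ A.H A.H N.M).inv ≫ (((A.σ ▷ A.H) ≫ A.μ) ▷ N.M) ≫ N.act)) ≫ N.act := by
        rw [reassoc_of% braidK A.H N.M]
    _ = (A.δ ⊗ₘ N.coact) ≫ (α_ (A.H ⊗ A.H) A.H N.M).inv ≫
          ((β_ (A.H ⊗ A.H) A.H).hom ▷ N.M) ≫ (α_ A.H (A.H ⊗ A.H) N.M).hom ≫
          (A.H ◁ ((((A.σ ▷ A.H) ≫ A.μ) ▷ N.M) ≫ N.act)) ≫ (A.σ ▷ N.M) ≫ N.act := by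
        rw [reassoc_of% whisker_exchange A.σ (α_ A.H A.H N.M).hom,
          ← MonoidalCategory.whiskerLeft_comp_assoc A.H (α_ A.H A.H N.M).hom,
          Iso.hom_inv_id_assoc,
          ← reassoc_of% whisker_exchange A.σ ((((A.σ ▷ A.H) ≫ A.μ) ▷ N.M) ≫ N.act)]
    _ = ((A.δ ≫ (A.σ ▷ A.H) ≫ A.μ) ⊗ₘ N.coact) ≫ (α_ A.H A.H N.M).inv ≫
          ((β_ A.H A.H).hom ▷ N.M) ≫ (α_ A.H A.H N.M).hom ≫
          (A.H ◁ N.act) ≫ (A.σ ▷ N.M) ≫ N.act := by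
        slice_lhs 5 5 => rw [MonoidalCategory.whiskerLeft_comp]
        slice_lhs 4 5 => rw [← associator_naturality_middle]
        slice_lhs 3 4 => rw [← comp_whiskerRight, ← braiding_naturality_left,
                             comp_whiskerRight]
        slice_lhs 2 3 => rw [← associator_inv_naturality_left]
        slice_lhs 1 2 => rw [← tensorHom_id (A.σ ▷ A.H ≫ A.μ), tensorHom_comp_tensorHom,
                             Category.comp_id]
        simp only [Category.assoc]
    _ = ((A.ε ≫ A.η) ⊗ₘ N.coact) ≫ (α_ A.H A.H N.M).inv ≫
          ((β_ A.H A.H).hom ▷ N.M) ≫ (α_ A.H A.H N.M).hom ≫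
          (A.H ◁ N.act) ≫ (A.σ ▷ N.M) ≫ N.act := by
        rw [A.antipode_left]
    _ = (A.ε ▷ N.M) ≫ (λ_ N.M).hom ≫ N.coact ≫ (A.σ ▷ N.M) ≫ N.act := by
        rw [show (A.ε ≫ A.η) ⊗ₘ N.coact = (A.ε ⊗ₘ N.coact) ≫ (A.η ▷ (A.H ⊗ N.M)) from by
          rw [← tensorHom_id A.η, tensorHom_comp_tensorHom, Category.comp_id]]
        rw [Category.assoc, associator_inv_naturality_left_assoc A.η A.H N.M]
        rw [← comp_whiskerRight_assoc, braiding_naturality_left A.η A.H,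
          braiding_tensorUnit_left, comp_whiskerRight_assoc, comp_whiskerRight_assoc]
        rw [associator_naturality_middle_assoc, ← MonoidalCategory.whiskerLeft_comp_assoc,
          N.act_one]
        rw [MonoidalCategory.tensorHom_def A.ε N.coact, Category.assoc]
        have hco : (α_ (𝟙_ C) A.H N.M).inv ≫ ((λ_ A.H).hom ▷ N.M) ≫ ((ρ_ A.H).inv ▷ N.M) ≫
            (α_ A.H (𝟙_ C) N.M).hom ≫ (A.H ◁ (λ_ N.M).hom) = (λ_ (A.H ⊗ N.M)).hom := by
          monoidal
        rw [reassoc_of% hco, reassoc_of% leftUnitor_naturality N.coact]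

open CategoryTheory.Limits in
/-- If the idempotent ν splits as ι ∘ υ, then υ is the coequalizer of the
action α and the trivial action ε ⊗ 1. -/
theorem upsilon_isCoequalizer {C : Type u} [Category.{v} C] [MonoidalCategory C]
    [BraidedCategory C] (A : HopfAlg C) (N : HopfModule A)
    (MH : C) (ι : MH ⟶ N.M) (υ : N.M ⟶ MH)
    (h1 : ι ≫ υ = 𝟙 MH)
    (h2 : υ ≫ ι = N.coact ≫ (A.σ ▷ N.M) ≫ N.act) :
    ∃ w : N.act ≫ υ = ((A.ε ▷ N.M) ≫ (λ_ N.M).hom) ≫ υ,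
      Nonempty (IsColimit (Cofork.ofπ υ w)) := by 
  have hsε : A.σ ≫ A.ε = A.ε := @HopfObj.antipode_counit C _ _ _ A.H A.toHopf_s8
  -- any morphism coequalizing the two maps is fixed by ν
  have hν : ∀ {X : C} (f : N.M ⟶ X),
      N.act ≫ f = ((A.ε ▷ N.M) ≫ (λ_ N.M).hom) ≫ f →
      N.coact ≫ (A.σ ▷ N.M) ≫ N.act ≫ f = f := by
    intro X f hf
    rw [hf]
    rw [Category.assoc, ← comp_whiskerRight_assoc, hsε, reassoc_of% N.coact_counit,
      Iso.inv_hom_id_assoc]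
  have hup : (N.coact ≫ (A.σ ▷ N.M) ≫ N.act) ≫ υ = υ := by
    rw [← h2, Category.assoc, h1, Category.comp_id]
  have w : N.act ≫ υ = ((A.ε ▷ N.M) ≫ (λ_ N.M).hom) ≫ υ := by
    conv_lhs => rw [← hup]
    have hk := congrArg (· ≫ υ) (key A N)
    simp only [Category.assoc] at hk ⊢
    rw [hk]
    have hup' : N.coact ≫ A.σ ▷ N.M ≫ N.act ≫ υ = υ := by
      simpa only [Category.assoc] using hup
    rw [hup']
  refine ⟨w, ⟨Cofork.IsColimit.mk _ (fun s => ι ≫ s.π) (fun s => ?_) (fun s m hm => ?_)⟩⟩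
  · have hc : N.act ≫ s.π = ((A.ε ▷ N.M) ≫ (λ_ N.M).hom) ≫ s.π := s.condition
    have := hν s.π hc
    simp only [Cofork.π_ofπ]
    rw [← Category.assoc, h2]
    simp only [Category.assoc]
    exact this
  · simp only [Cofork.π_ofπ] at hm
    show m = ι ≫ s.π
    rw [← hm, ← Category.assoc, h1, Category.id_comp]
end

section
/- Let M be a left H-Hopf module with splitting ι, υ of the idempotent ν. With ξ := α ∘ (1_H ⊗ ι) and ψ := (1_H ⊗ υ) ∘ φ, one has ψ ∘ ξ = 1_{H ⊗ M^H}. -/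
open CategoryTheory MonoidalCategory BraidedCategory

universe v u

set_option maxHeartbeats 1000000
section AuxHopf
variable {C : Type u} [Category.{v} C] [MonoidalCategory C] [BraidedCategory C]


/-- bridge to mathlib's `Hopf_` -/
def HopfAlg.toHopf_ (A : HopfAlg C) : HopfObj A.H :=
  letI : MonObj A.H := MonObj.mk A.η A.μ A.one_mul A.mul_one A.mul_assoc
  letI : ComonObj A.H :=
    { counit := A.ε, comul := A.δ, counit_comul := A.counit_left,
      comul_counit := A.counit_right,
      comul_assoc := by rw [reassoc_of% A.coassoc]; simp }
  letI : BimonObj A.H :=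
    { mul_comul := A.mul_comul,
      one_comul := A.one_comul,
      mul_counit := A.mul_counit,
      one_counit := A.one_counit }
  { antipode := A.σ
    antipode_left := A.antipode_left
    antipode_right := A.antipode_right }

theorem HopfAlg.sigma_comul (A : HopfAlg C) :
    A.σ ≫ A.δ = A.δ ≫ (β_ A.H A.H).hom ≫ (A.σ ⊗ₘ A.σ) :=
  by letI := A.toHopf_; exact HopfObj.antipode_comul A.H

theorem braid_lemma (X Y Z W : C) :
    ((β_ X Y).hom ▷ (Z ⊗ W)) ≫ tensorμ Y X Z W =
      (α_ X Y (Z ⊗ W)).hom ≫ (X ◁ (α_ Y Z W).inv) ≫ (α_ X (Y ⊗ Z) W).inv ≫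
        ((β_ X (Y ⊗ Z)).hom ▷ W) ≫ (α_ (Y ⊗ Z) X W).hom := by
  dsimp [tensorμ]
  simp

theorem braid_counit (X Y Z : C) (f : Y ⟶ 𝟙_ C) :
    (α_ X Y Z).inv ≫ ((β_ X Y).hom ▷ Z) ≫ (α_ Y X Z).hom ≫ (f ▷ (X ⊗ Z)) =
      (X ◁ (f ▷ Z)) ≫ (X ◁ (λ_ Z).hom) ≫ (λ_ (X ⊗ Z)).inv := by
  have h : (β_ X Y).hom ≫ (f ▷ X) = (X ◁ f) ≫ (β_ X (𝟙_ C)).hom :=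
    (braiding_naturality_right X f).symm
  rw [← associator_naturality_left]
  slice_lhs 2 3 => rw [← comp_whiskerRight, h]
  simp

theorem nu_coact_generic (H M : C) (η : 𝟙_ C ⟶ H) (μ : H ⊗ H ⟶ H) (ε : H ⟶ 𝟙_ C)
    (δ : H ⟶ H ⊗ H) (σ : H ⟶ H) (a : H ⊗ M ⟶ M) (φ : M ⟶ H ⊗ M)
    (antipode_left : δ ≫ (σ ▷ H) ≫ μ = ε ≫ η)
    (sigma_comul : σ ≫ δ = δ ≫ (β_ H H).hom ≫ (σ ⊗ₘ σ))
    (coact_comul : φ ≫ (δ ▷ M) = φ ≫ (H ◁ φ) ≫ (α_ H H M).inv)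
    (coact_counit : φ ≫ (ε ▷ M) = (λ_ M).inv)
    (compat : a ≫ φ = (δ ⊗ₘ φ) ≫ tensorμ H H H M ≫ (μ ⊗ₘ a)) :
    (φ ≫ (σ ▷ M) ≫ a) ≫ φ = (φ ≫ (σ ▷ M) ≫ a) ≫ (λ_ M).inv ≫ (η ▷ M) := by
  simp only [Category.assoc]
  rw [compat]
  -- (σ ▷ M) ≫ (δ ⊗ₘ φ) = (σ ≫ δ) ⊗ₘ φ
  have e2 : (σ ▷ M) ≫ (δ ⊗ₘ φ) = (σ ≫ δ) ⊗ₘ φ := by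
    rw [← tensorHom_id σ, tensorHom_comp_tensorHom, Category.id_comp]
  slice_lhs 2 3 => rw [e2]
  rw [sigma_comul]
  have e4 : ((δ ≫ (β_ H H).hom ≫ (σ ⊗ₘ σ)) ⊗ₘ φ) =
      (δ ⊗ₘ φ) ≫ ((β_ H H).hom ▷ (H ⊗ M)) ≫ ((σ ⊗ₘ σ) ▷ (H ⊗ M)) := by
    simp only [← tensorHom_id, tensorHom_comp_tensorHom, Category.comp_id]
  rw [e4]
  simp only [Category.assoc]
  rw [tensorμ_natural_left_assoc]
  rw [show ((σ ▷ H) ⊗ₘ (σ ▷ M)) ≫ (μ ⊗ₘ a) = ((σ ▷ H) ≫ μ) ⊗ₘ ((σ ▷ M) ≫ a) from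
    (tensorHom_comp_tensorHom _ _ _ _)]
  rw [reassoc_of% (braid_lemma H H H M)]
  have front : φ ≫ (δ ⊗ₘ φ) ≫ (α_ H H (H ⊗ M)).hom ≫ (H ◁ (α_ H H M).inv) =
      φ ≫ (H ◁ φ) ≫ (H ◁ (δ ▷ M)) := by
    rw [MonoidalCategory.tensorHom_def δ φ, Category.assoc, reassoc_of% coact_comul]
    conv_rhs => rw [← MonoidalCategory.whiskerLeft_comp, coact_comul]
    simp
  rw [reassoc_of% front]
  rw [associator_inv_naturality_middle_assoc]
  rw [← comp_whiskerRight_assoc, braiding_naturality_right H δ, comp_whiskerRight_assoc]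
  rw [associator_naturality_left_assoc]
  rw [← tensorHom_id δ, tensorHom_comp_tensorHom, Category.id_comp, antipode_left]
  have e13 : (ε ≫ η) ⊗ₘ ((σ ▷ M) ≫ a) =
      (ε ▷ (H ⊗ M)) ≫ ((𝟙_ C) ◁ ((σ ▷ M) ≫ a)) ≫ (η ▷ M) := by
    rw [MonoidalCategory.tensorHom_def, comp_whiskerRight, Category.assoc, ← whisker_exchange]
  rw [e13]
  rw [reassoc_of% (braid_counit H H M ε)]
  rw [← MonoidalCategory.whiskerLeft_comp_assoc, ← Category.assoc φ, coact_counit]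
  simp only [Category.assoc, whiskerLeft_inv_hom_assoc]
  rw [← leftUnitor_inv_naturality_assoc]
  simp only [Category.assoc]

theorem unit_tensorμ (H M : C) (η : 𝟙_ C ⟶ H) (μ : H ⊗ H ⟶ H) (a : H ⊗ M ⟶ M)
    (mul_one : (H ◁ η) ≫ μ = (ρ_ H).hom) :
    ((H ⊗ H) ◁ ((λ_ M).inv ≫ (η ▷ M))) ≫ tensorμ H H H M ≫ (μ ⊗ₘ a) =
      (α_ H H M).hom ≫ (H ◁ a) := by
  rw [MonoidalCategory.whiskerLeft_comp, ← tensorHom_id η, Category.assoc,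
    tensorμ_natural_right_assoc]
  rw [tensorHom_comp_tensorHom, mul_one, MonoidalCategory.whiskerLeft_id, Category.id_comp]
  rw [show (ρ_ H).hom ⊗ₘ a = ((ρ_ H).hom ▷ (H ⊗ M)) ≫ (H ◁ a) by
    rw [← tensorHom_id, ← id_tensorHom, tensorHom_comp_tensorHom]; simp]
  have this1 : ((H ⊗ H) ◁ (λ_ M).inv) ≫ tensorμ H H (𝟙_ C) M ≫ ((ρ_ H).hom ▷ (H ⊗ M)) =
      (α_ H H M).hom := by
    dsimp [tensorμ]
    simp
    monoidal
  rw [reassoc_of% this1]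

section
variable {H M MH : C} (η : 𝟙_ C ⟶ H) (μ : H ⊗ H ⟶ H) (ε : H ⟶ 𝟙_ C)
    (δ : H ⟶ H ⊗ H) (σ : H ⟶ H) (a : H ⊗ M ⟶ M) (φ : M ⟶ H ⊗ M)
    (ι : MH ⟶ M) (υ : M ⟶ MH)

theorem iota_coact
    (nu_coact : (φ ≫ (σ ▷ M) ≫ a) ≫ φ = (φ ≫ (σ ▷ M) ≫ a) ≫ (λ_ M).inv ≫ (η ▷ M))
    (h1 : ι ≫ υ = 𝟙 MH) (h2 : υ ≫ ι = φ ≫ (σ ▷ M) ≫ a) :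
    ι ≫ φ = ι ≫ (λ_ M).inv ≫ (η ▷ M) :=
  calc ι ≫ φ = (ι ≫ υ) ≫ ι ≫ φ := by rw [h1, Category.id_comp]
    _ = ι ≫ (υ ≫ ι) ≫ φ := by simp only [Category.assoc]
    _ = ι ≫ (φ ≫ (σ ▷ M) ≫ a) ≫ φ := by rw [h2]
    _ = ι ≫ (φ ≫ (σ ▷ M) ≫ a) ≫ (λ_ M).inv ≫ (η ▷ M) := by rw [nu_coact]
    _ = ι ≫ (υ ≫ ι) ≫ (λ_ M).inv ≫ (η ▷ M) := by rw [h2]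
    _ = (ι ≫ υ) ≫ ι ≫ (λ_ M).inv ≫ (η ▷ M) := by simp only [Category.assoc]
    _ = ι ≫ (λ_ M).inv ≫ (η ▷ M) := by rw [h1, Category.id_comp]

theorem xi_coact
    (compat : a ≫ φ = (δ ⊗ₘ φ) ≫ tensorμ H H H M ≫ (μ ⊗ₘ a))
    (mul_one : (H ◁ η) ≫ μ = (ρ_ H).hom)
    (ic : ι ≫ φ = ι ≫ (λ_ M).inv ≫ (η ▷ M)) :
    (H ◁ ι) ≫ a ≫ φ = (δ ▷ MH) ≫ (α_ H H MH).hom ≫ (H ◁ ((H ◁ ι) ≫ a)) := by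
  rw [compat]
  rw [show (H ◁ ι) ≫ ((δ ⊗ₘ φ) ≫ tensorμ H H H M ≫ (μ ⊗ₘ a)) =
      (δ ⊗ₘ (ι ≫ φ)) ≫ tensorμ H H H M ≫ (μ ⊗ₘ a) by
    rw [← id_tensorHom, tensorHom_comp_tensorHom_assoc, Category.id_comp]]
  rw [ic]
  rw [show δ ⊗ₘ (ι ≫ (λ_ M).inv ≫ (η ▷ M)) =
      (δ ▷ MH) ≫ ((H ⊗ H) ◁ ι) ≫ ((H ⊗ H) ◁ ((λ_ M).inv ≫ (η ▷ M))) by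
    rw [MonoidalCategory.tensorHom_def, MonoidalCategory.whiskerLeft_comp]]
  simp only [Category.assoc]
  rw [unit_tensorμ H M η μ a mul_one]
  rw [associator_naturality_right_assoc]
  simp [MonoidalCategory.whiskerLeft_comp]

theorem act_upsilon
    (act_mul : (μ ▷ M) ≫ a = (α_ H H M).hom ≫ (H ◁ a) ≫ a)
    (act_one : (η ▷ M) ≫ a = (λ_ M).hom)
    (antipode_left : δ ≫ (σ ▷ H) ≫ μ = ε ≫ η)
    (xc : (H ◁ ι) ≫ a ≫ φ = (δ ▷ MH) ≫ (α_ H H MH).hom ≫ (H ◁ ((H ◁ ι) ≫ a)))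
    (h1 : ι ≫ υ = 𝟙 MH) (h2 : υ ≫ ι = φ ≫ (σ ▷ M) ≫ a) :
    (H ◁ ι) ≫ a ≫ υ = (ε ▷ MH) ≫ (λ_ MH).hom := by
  have hu : υ = φ ≫ (σ ▷ M) ≫ a ≫ υ := by
    conv_lhs => rw [← Category.comp_id υ, ← h1, ← Category.assoc, h2]
    simp only [Category.assoc]
  conv_lhs => rw [hu]
  rw [show a ≫ φ ≫ (σ ▷ M) ≫ a ≫ υ = (a ≫ φ) ≫ (σ ▷ M) ≫ a ≫ υ by
    simp only [Category.assoc]]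
  rw [← Category.assoc (H ◁ ι), xc]
  simp only [Category.assoc]
  rw [whisker_exchange_assoc]
  rw [← associator_naturality_left_assoc]
  have e : (H ◁ a) ≫ a = (α_ H H M).inv ≫ (μ ▷ M) ≫ a := by
    rw [act_mul]; simp
  rw [MonoidalCategory.whiskerLeft_comp]
  slice_lhs 5 6 => rw [e]
  simp only [Category.assoc]
  rw [associator_inv_naturality_right_assoc, Iso.hom_inv_id_assoc]
  rw [whisker_exchange_assoc]
  rw [← comp_whiskerRight_assoc, ← comp_whiskerRight_assoc, Category.assoc,
    antipode_left, comp_whiskerRight_assoc]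
  rw [← whisker_exchange_assoc]
  rw [reassoc_of% act_one]
  rw [leftUnitor_naturality_assoc, h1, Category.comp_id]
end

theorem main_generic {H M MH : C} (η : 𝟙_ C ⟶ H) (μ : H ⊗ H ⟶ H) (ε : H ⟶ 𝟙_ C)
    (δ : H ⟶ H ⊗ H) (a : H ⊗ M ⟶ M) (φ : M ⟶ H ⊗ M) (ι : MH ⟶ M) (υ : M ⟶ MH)
    (counit_right : δ ≫ (H ◁ ε) = (ρ_ H).inv)
    (xc : (H ◁ ι) ≫ a ≫ φ = (δ ▷ MH) ≫ (α_ H H MH).hom ≫ (H ◁ ((H ◁ ι) ≫ a)))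
    (au : (H ◁ ι) ≫ a ≫ υ = (ε ▷ MH) ≫ (λ_ MH).hom) :
    ((H ◁ ι) ≫ a) ≫ (φ ≫ (H ◁ υ)) = 𝟙 (H ⊗ MH) := by
  have xc' := reassoc_of% xc
  simp only [Category.assoc]
  rw [xc']
  rw [← MonoidalCategory.whiskerLeft_comp, Category.assoc, au]
  rw [MonoidalCategory.whiskerLeft_comp, ← associator_naturality_middle_assoc,
    ← comp_whiskerRight_assoc, counit_right]
  simp

end AuxHopf

/-- With ξ = α ∘ (1 ⊗ ι) and ψ = (1 ⊗ υ) ∘ φ, one has ψ ∘ ξ = 1. -/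
theorem psi_comp_xi {C : Type u} [Category.{v} C] [MonoidalCategory C]
    [BraidedCategory C] (A : HopfAlg C) (N : HopfModule A)
    (MH : C) (ι : MH ⟶ N.M) (υ : N.M ⟶ MH)
    (h1 : ι ≫ υ = 𝟙 MH)
    (h2 : υ ≫ ι = N.coact ≫ (A.σ ▷ N.M) ≫ N.act) :
    ((A.H ◁ ι) ≫ N.act) ≫ (N.coact ≫ (A.H ◁ υ)) = 𝟙 (A.H ⊗ MH) := by
  have sc := A.sigma_comul
  have nc := nu_coact_generic A.H N.M A.η A.μ A.ε A.δ A.σ N.act N.coact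
    A.antipode_left sc N.coact_comul N.coact_counit N.compat
  have ic := iota_coact A.η A.σ N.act N.coact ι υ nc h1 h2
  have xc := xi_coact A.η A.μ A.δ N.act N.coact ι N.compat A.mul_one ic
  have au := act_upsilon A.η A.μ A.ε A.δ A.σ N.act N.coact ι υ N.act_mul N.act_one
    A.antipode_left xc h1 h2
  exact main_generic A.η A.μ A.ε A.δ N.act N.coact ι υ A.counit_right xc au
end
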